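/- Let E be a field, e ≥ 1, R = E[Y] (polynomial ring, or a suitable quotient), and A = R[X]/(X^e − Y). Let M be a free A-module of rank d, x an E-point of Spec(A) corresponding to X ↦ X(x), and w(x) the induced point of Spec(R). Set M_{w(x)} = M ⊗_R R/m_{w(x)} and P_x(X) = (X^e − X(x)^e)/(X − X(x)) ∈ E[X]. Then multiplication by P_x(X) induces an isomorphism from M_x = M/m_x M onto M[x] := ker(X − X(x) : M_{w(x)} → M_{w(x)}). -/
import Mathlib


set_option synthInstance.maxHeartbeats 1000000
set_option maxHeartbeats 1000000
open Polynomial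

/-- The fiber algebra `E[X]/(X^e - b)`; for `b = a^e` this is the fiber
`A ⊗_R R/m_{w(x)}` of `A = R[X]/(X^e - Y)` over the weight `w(x)`. -/
abbrev FiberAlg (E : Type*) [Field E] (e : ℕ) (b : E) : Type _ :=
  Polynomial E ⧸ Ideal.span {(X : Polynomial E) ^ e - C b}

/-- Multiplication by `q` on the free module `(E[X]/(X^e - b))^d`. -/
noncomputable def mulBy (E : Type*) [Field E] (e : ℕ) (b : E) (d : ℕ)
    (q : FiberAlg E e b) :
    (Fin d → FiberAlg E e b) →ₗ[FiberAlg E e b] (Fin d → FiberAlg E e b) :=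
  LinearMap.lsmul (FiberAlg E e b) (Fin d → FiberAlg E e b) q

/-- With `A = R[X]/(X^e - Y)`, `M` free of rank `d` over `A`, and `x` an
`E`-point with `X(x) = a` (so `M_{w(x)} ≅ (E[X]/(X^e - a^e))^d`), multiplication by
`P_x(X) = (X^e - a^e)/(X - a) = ∑_{i<e} X^i a^{e-1-i}` induces an isomorphism
`M_x = M_{w(x)}/(X - a) ≅ M[x] = ker(X - a)`: its range is `ker(X - a)` and its kernel
is `(X - a)·M_{w(x)}`. -/
theorem mul_Px_induces_iso (E : Type*) [Field E] (e d : ℕ) (he : 1 ≤ e) (a : E) :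
    (LinearMap.range (mulBy E e (a ^ e) d
        (Ideal.Quotient.mk (Ideal.span {(X : Polynomial E) ^ e - C (a ^ e)})
          (∑ i ∈ Finset.range e, X ^ i * C (a ^ (e - 1 - i)))))
      = LinearMap.ker (mulBy E e (a ^ e) d
        (Ideal.Quotient.mk (Ideal.span {(X : Polynomial E) ^ e - C (a ^ e)}) (X - C a))))
    ∧ (LinearMap.ker (mulBy E e (a ^ e) d
        (Ideal.Quotient.mk (Ideal.span {(X : Polynomial E) ^ e - C (a ^ e)})
          (∑ i ∈ Finset.range e, X ^ i * C (a ^ (e - 1 - i)))))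
      = LinearMap.range (mulBy E e (a ^ e) d
        (Ideal.Quotient.mk (Ideal.span {(X : Polynomial E) ^ e - C (a ^ e)}) (X - C a)))) := by
  classical
  set f : Polynomial E := X ^ e - C (a ^ e) with hf
  set p : Polynomial E := ∑ i ∈ Finset.range e, X ^ i * C (a ^ (e - 1 - i)) with hp
  set g : Polynomial E := X - C a with hg
  have hpg : p * g = f := by
    rw [hp, hg, hf]
    have h := geom_sum₂_mul (X : Polynomial E) (C a) e
    simp only [← C_pow] at h
    exact h
  have hf0 : f ≠ 0 := (monic_X_pow_sub_C (a ^ e) (by omega)).ne_zero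
  have hg0 : g ≠ 0 := X_sub_C_ne_zero a
  have hp0 : p ≠ 0 := by
    intro h; exact hf0 (by rw [← hpg, h, zero_mul])
  set mk := Ideal.Quotient.mk (Ideal.span {f}) with hmk
  have hmkf : mk f = 0 :=
    Ideal.Quotient.eq_zero_iff_mem.mpr (Ideal.mem_span_singleton_self f)
  have hgp0 : mk g * mk p = 0 := by
    rw [← map_mul, mul_comm, hpg, hmkf]
  have key1 : ∀ z : FiberAlg E e (a ^ e), mk g * z = 0 ↔ ∃ w, mk p * w = z := by
    intro z
    obtain ⟨q, rfl⟩ := Ideal.Quotient.mk_surjective z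
    constructor
    · intro h
      have : f ∣ g * q := by
        rwa [← Ideal.mem_span_singleton, ← Ideal.Quotient.eq_zero_iff_mem, map_mul]
      have hdvd : p ∣ q := by
        rw [← hpg] at this
        rw [mul_comm g q] at this
        exact (mul_dvd_mul_iff_right hg0).mp this
      obtain ⟨r, rfl⟩ := hdvd
      exact ⟨mk r, by rw [← map_mul]⟩
    · rintro ⟨w, hw⟩
      rw [← hw, ← mul_assoc, hgp0, zero_mul]
  have key2 : ∀ z : FiberAlg E e (a ^ e), mk p * z = 0 ↔ ∃ w, mk g * w = z := by
    intro z
    obtain ⟨q, rfl⟩ := Ideal.Quotient.mk_surjective z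
    constructor
    · intro h
      have : f ∣ p * q := by
        rwa [← Ideal.mem_span_singleton, ← Ideal.Quotient.eq_zero_iff_mem, map_mul]
      have hdvd : g ∣ q := by
        rw [← hpg] at this
        exact (mul_dvd_mul_iff_left hp0).mp this
      obtain ⟨r, rfl⟩ := hdvd
      exact ⟨mk r, by rw [← map_mul]⟩
    · rintro ⟨w, hw⟩
      rw [← hw, ← mul_assoc, mul_comm (mk p) (mk g), hgp0, zero_mul]
  constructor
  · ext v
    simp only [mulBy, LinearMap.mem_range, LinearMap.mem_ker, LinearMap.lsmul_apply]
    constructor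
    · rintro ⟨w, rfl⟩
      funext i
      simp only [Pi.smul_apply, smul_eq_mul, Pi.zero_apply]
      rw [← mul_assoc, hgp0, zero_mul]
    · intro h
      have h' : ∀ i, ∃ w, mk p * w = v i := by
        intro i
        exact (key1 (v i)).mp (congrFun h i)
      choose w hw using h'
      refine ⟨w, funext fun i => ?_⟩
      simpa using hw i
  · ext v
    simp only [mulBy, LinearMap.mem_range, LinearMap.mem_ker, LinearMap.lsmul_apply]
    constructor
    · intro h
      have h' : ∀ i, ∃ w, mk g * w = v i := by
        intro i
        exact (key2 (v i)).mp (congrFun h i)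
      choose w hw using h'
      refine ⟨w, funext fun i => ?_⟩
      simpa using hw i
    · rintro ⟨w, rfl⟩
      funext i
      simp only [Pi.smul_apply, smul_eq_mul, Pi.zero_apply]
      rw [← mul_assoc, mul_comm (mk p) (mk g), hgp0, zero_mul]
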